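/- There exists a joint distribution over two random variables X and Y, each taking 4 values, such that I(X:Y) > log₂ 3; consequently no common-cause-only model with a latent variable of cardinality 3 can generate it. -/

import Mathlib

open Finset Real
open scoped Classical

/-- Probability mass of an event under pmf `p` on a finite sample space. -/
noncomputable def pmass {Ω : Type*} [Fintype Ω] (p : Ω → ℝ) (E : Ω → Prop) : ℝ :=
  ∑ ω, if E ω then p ω else 0

/-- Conditional probability P(E | F). -/
noncomputable def condProb {Ω : Type*} [Fintype Ω] (p : Ω → ℝ) (E F : Ω → Prop) : ℝ :=
  pmass p (fun ω => E ω ∧ F ω) / pmass p F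

/-- `p` is a probability mass function. -/
structure IsPMF {Ω : Type*} [Fintype Ω] (p : Ω → ℝ) : Prop where
  nonneg : ∀ ω, 0 ≤ p ω
  sum_one : ∑ ω, p ω = 1

/-- Base-2 Shannon entropy of a finite-valued random variable. -/
noncomputable def ent {Ω α : Type*} [Fintype Ω] [Fintype α] (p : Ω → ℝ) (X : Ω → α) : ℝ :=
  -∑ a, pmass p (fun ω => X ω = a) * Real.logb 2 (pmass p (fun ω => X ω = a))

/-- Mutual information I(X:Y) = H(X) + H(Y) - H(X,Y). -/
noncomputable def mi {Ω α β : Type*} [Fintype Ω] [Fintype α] [Fintype β]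
    (p : Ω → ℝ) (X : Ω → α) (Y : Ω → β) : ℝ :=
  ent p X + ent p Y - ent p (fun ω => (X ω, Y ω))

/-- Entropy of `X` in the conditional distribution given event `E`. -/
noncomputable def condEntGiven {Ω α : Type*} [Fintype Ω] [Fintype α]
    (p : Ω → ℝ) (X : Ω → α) (E : Ω → Prop) : ℝ :=
  -∑ a, condProb p (fun ω => X ω = a) E * Real.logb 2 (condProb p (fun ω => X ω = a) E)

/-- Conditional entropy H(X|Y) = ∑_y P(Y=y) H(X|Y=y). -/
noncomputable def condEnt {Ω α β : Type*} [Fintype Ω] [Fintype α] [Fintype β]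
    (p : Ω → ℝ) (X : Ω → α) (Y : Ω → β) : ℝ :=
  ∑ b, pmass p (fun ω => Y ω = b) * condEntGiven p X (fun ω => Y ω = b)

/-- Mutual information of X and Y in the conditional distribution given event `E`. -/
noncomputable def condMIGiven {Ω α β : Type*} [Fintype Ω] [Fintype α] [Fintype β]
    (p : Ω → ℝ) (X : Ω → α) (Y : Ω → β) (E : Ω → Prop) : ℝ :=
  condEntGiven p X E + condEntGiven p Y E - condEntGiven p (fun ω => (X ω, Y ω)) E

/-- Conditional mutual information I(X:Y|Z) = ∑_z P(Z=z) I(X:Y|Z=z). -/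
noncomputable def condMI {Ω α β γ : Type*} [Fintype Ω] [Fintype α] [Fintype β] [Fintype γ]
    (p : Ω → ℝ) (X : Ω → α) (Y : Ω → β) (Z : Ω → γ) : ℝ :=
  ∑ z, pmass p (fun ω => Z ω = z) * condMIGiven p X Y (fun ω => Z ω = z)

/-- X and Y are conditionally independent given U:
P(X=a, Y=b | U=u) = P(X=a|U=u)·P(Y=b|U=u) whenever P(U=u) > 0. -/
def CondIndep {Ω α β γ : Type*} [Fintype Ω]
    (p : Ω → ℝ) (X : Ω → α) (Y : Ω → β) (U : Ω → γ) : Prop :=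
  ∀ u a b, 0 < pmass p (fun ω => U ω = u) →
    condProb p (fun ω => X ω = a ∧ Y ω = b) (fun ω => U ω = u) =
      condProb p (fun ω => X ω = a) (fun ω => U ω = u) *
        condProb p (fun ω => Y ω = b) (fun ω => U ω = u)

/-- X and Y are (unconditionally) independent. -/
def Indep {Ω α β : Type*} [Fintype Ω]
    (p : Ω → ℝ) (X : Ω → α) (Y : Ω → β) : Prop :=
  ∀ a b, pmass p (fun ω => X ω = a ∧ Y ω = b) =
    pmass p (fun ω => X ω = a) * pmass p (fun ω => Y ω = b)

/-! ### Auxiliary material -/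

lemma logb_quarter' : Real.logb 2 (1/4 : ℝ) = -2 := by
  rw [Real.logb, show (1/4:ℝ) = 2^(-2:ℤ) by norm_num, Real.log_zpow]
  have : Real.log 2 ≠ 0 := by positivity
  field_simp
  norm_num

lemma logb_four' : Real.logb 2 (4 : ℝ) = 2 := by
  rw [Real.logb, show (4:ℝ) = 2^(2:ℕ) by norm_num, Real.log_pow]
  have : Real.log 2 ≠ 0 := by positivity
  field_simp
  norm_num

lemma logb_three_lt_two' : Real.logb 2 3 < 2 := by
  have := Real.logb_lt_logb (b := 2) (x := 3) (y := 4) (by norm_num) (by norm_num) (by norm_num)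
  rw [logb_four'] at this; exact this

section AuxProb
variable {Ω : Type*} [Fintype Ω] {q : Ω → ℝ}

lemma pmass_nonneg' (hq : ∀ ω, 0 ≤ q ω) (E : Ω → Prop) : 0 ≤ pmass q E :=
  Finset.sum_nonneg fun ω _ => by by_cases h : E ω <;> simp [pmass, h, hq ω]

lemma pmass_mono' (hq : ∀ ω, 0 ≤ q ω) {E F : Ω → Prop} (h : ∀ ω, E ω → F ω) :
    pmass q E ≤ pmass q F := by
  apply Finset.sum_le_sum
  intro ω _
  by_cases hE : E ω
  · simp [hE, h ω hE]
  · by_cases hF : F ω <;> simp [hE, hF, hq ω]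

lemma pmass_total' {γ : Type*} [Fintype γ] (E : Ω → Prop) (U : Ω → γ) :
    pmass q E = ∑ u, pmass q (fun ω => E ω ∧ U ω = u) := by
  unfold pmass
  rw [Finset.sum_comm]
  refine Finset.sum_congr rfl fun ω _ => ?_
  by_cases h : E ω <;> simp [h]

lemma pmass_inter_eq' (hq : ∀ ω, 0 ≤ q ω) (E F : Ω → Prop) :
    pmass q (fun ω => E ω ∧ F ω) = pmass q F * condProb q E F := by
  rcases eq_or_lt_of_le (pmass_nonneg' hq F) with h | h
  · have h0 : pmass q (fun ω => E ω ∧ F ω) = 0 :=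
      le_antisymm (le_of_le_of_eq (pmass_mono' hq fun ω hw => hw.2) h.symm)
        (pmass_nonneg' hq _)
    rw [h0, ← h, zero_mul]
  · rw [condProb, mul_div_cancel₀ _ (ne_of_gt h)]

end AuxProb

/-- The witness distribution: uniform on the diagonal of `Fin 4 × Fin 4`. -/
noncomputable def Pdiag : Fin 4 × Fin 4 → ℝ := fun ab => if ab.1 = ab.2 then 1/4 else 0

lemma pm_fst' (a : Fin 4) : pmass Pdiag (fun ω => ω.1 = a) = 1/4 := by
  unfold pmass Pdiag
  rw [Fintype.sum_prod_type]
  fin_cases a <;> simp [Fin.sum_univ_four]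

lemma pm_snd' (a : Fin 4) : pmass Pdiag (fun ω => ω.2 = a) = 1/4 := by
  unfold pmass Pdiag
  rw [Fintype.sum_prod_type]
  fin_cases a <;> simp [Fin.sum_univ_four]

lemma pm_pair' (c : Fin 4 × Fin 4) : pmass Pdiag (fun ω => (ω.1, ω.2) = c) = Pdiag c := by
  unfold pmass
  simp

lemma mi_Pdiag : mi Pdiag Prod.fst Prod.snd = 2 := by
  unfold mi ent
  simp only [pm_fst', pm_snd']
  have h : ∀ c : Fin 4 × Fin 4,
      pmass Pdiag (fun ω => (Prod.fst ω, Prod.snd ω) = c) = Pdiag c := pm_pair'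
  simp only [h]
  rw [Fintype.sum_prod_type]
  simp [Fin.sum_univ_four, Pdiag, logb_quarter']
  rw [logb_four']

lemma sum_Pdiag : (∑ ω, Pdiag ω) = 1 := by
  unfold Pdiag
  rw [Fintype.sum_prod_type]
  simp [Fin.sum_univ_four]

theorem no_card3 (Ω : Type) [Fintype Ω] (q : Ω → ℝ) (X : Ω → Fin 4) (Y : Ω → Fin 4)
    (U : Ω → Fin 3) (hq : IsPMF q)
    (hm : ∀ a b, pmass q (fun ω => X ω = a ∧ Y ω = b) = Pdiag (a, b)) :
    ¬ CondIndep q X Y U := by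
  intro hci
  set W : Fin 3 → ℝ := fun u => pmass q (fun ω => U ω = u) with hW
  set f : Fin 3 → Fin 4 → ℝ := fun u a => condProb q (fun ω => X ω = a) (fun ω => U ω = u) with hf
  set g : Fin 3 → Fin 4 → ℝ := fun u b => condProb q (fun ω => Y ω = b) (fun ω => U ω = u) with hg
  have key : ∀ a b, Pdiag (a, b) = ∑ u, (W u * f u a) * g u b := by
    intro a b
    rw [← hm a b, pmass_total' (fun ω => X ω = a ∧ Y ω = b) U]
    refine Finset.sum_congr rfl fun u _ => ?_
    rw [pmass_inter_eq' hq.nonneg]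
    simp only [hW, hf, hg]
    rcases eq_or_lt_of_le (pmass_nonneg' hq.nonneg (fun ω => U ω = u)) with h | h
    · rw [← h, zero_mul, zero_mul, zero_mul]
    · rw [hci u a b h, mul_assoc]
  set V : Submodule ℝ (Fin 4 → ℝ) := Submodule.span ℝ (Set.range g) with hV
  have hmem : ∀ a : Fin 4, Pi.single a (1:ℝ) ∈ V := by
    intro a
    have : Pi.single a (1:ℝ) = ∑ u, (4 * (W u * f u a)) • g u := by
      funext b
      have hb := key a b
      simp only [Finset.sum_apply, Pi.smul_apply, smul_eq_mul, Pi.single_apply]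
      rw [show ∑ u, 4 * (W u * f u a) * g u b = 4 * ∑ u, (W u * f u a) * g u b by
        rw [Finset.mul_sum]; exact Finset.sum_congr rfl fun u _ => by ring]
      rw [← hb]
      unfold Pdiag
      by_cases h : a = b
      · simp [h, eq_comm]
      · simp [h, Ne.symm h]
    rw [this]
    exact Submodule.sum_mem _ fun u _ =>
      Submodule.smul_mem _ _ (Submodule.subset_span (Set.mem_range_self u))
  have hli : LinearIndependent ℝ (fun a : Fin 4 => Pi.single a (1:ℝ)) := by
    have := (Pi.basisFun ℝ (Fin 4)).linearIndependent
    simpa [funext (Pi.basisFun_apply ℝ (Fin 4))] using this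
  have hli' : LinearIndependent ℝ (fun a : Fin 4 => (⟨Pi.single a 1, hmem a⟩ : V)) := by
    apply LinearIndependent.of_comp V.subtype
    exact hli
  have h4 : 4 ≤ Module.finrank ℝ V := by
    simpa using hli'.fintype_card_le_finrank
  have h3 : Module.finrank ℝ V ≤ 3 := by
    refine le_trans (finrank_span_le_card _) ?_
    have := Fintype.card_range_le g
    rw [Set.toFinset_card]
    simpa using this
  omega

theorem exists_dist_violating_card_three :
    ∃ p : Fin 4 × Fin 4 → ℝ, IsPMF p ∧
      Real.logb 2 3 < mi p Prod.fst Prod.snd ∧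
      ∀ (Ω : Type) (_ : Fintype Ω) (q : Ω → ℝ) (X : Ω → Fin 4) (Y : Ω → Fin 4)
          (U : Ω → Fin 3), IsPMF q →
        (∀ a b, pmass q (fun ω => X ω = a ∧ Y ω = b) = p (a, b)) →
        ¬ CondIndep q X Y U := by
  refine ⟨Pdiag, ⟨fun ω => ?_, sum_Pdiag⟩, ?_, ?_⟩
  · unfold Pdiag; by_cases h : ω.1 = ω.2 <;> simp [h]
  · rw [mi_Pdiag]; exact logb_three_lt_two'
  · intro Ω inst q X Y U hq hm
    exact no_card3 Ω q X Y U hq hm
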